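/- Let a : ℕ≥1 → ℂ satisfy |a(m)| ≤ C·m^{σ₀} for some constants C > 0 and σ₀ ≥ 0. Then for every real σ > σ₀ + 1 and every X > 0 one has Σ_{m≥1} a(m)·e^{−m/X} = (1/2π)·∫_ℝ L(σ+it)·Γ(σ+it)·X^{σ+it} dt, where L(s) := Σ_{m≥1} a(m)·m^{−s} (absolutely convergent for Re s > σ₀ + 1), Γ is the complex Gamma function, and both the series and the integral converge absolutely. -/

import Mathlib

open Complex MeasureTheory Set

/-- Inverse Mellin transform: for `σ > σ₀ + 1`,
`Σ_{m≥1} a(m) e^{−m/X} = (1/2π) ∫_ℝ L(σ+it) Γ(σ+it) X^{σ+it} dt`, where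
`L(s) = Σ a(m) m^{−s}`; both the series and the integral converge absolutely. -/

lemma norm_Gamma_le {z : ℂ} (hz : 0 < z.re) : ‖Complex.Gamma z‖ ≤ Real.Gamma z.re := by
  rw [Complex.Gamma_eq_integral hz, Complex.GammaIntegral,
    Real.Gamma_eq_integral hz]
  refine (norm_integral_le_integral_norm _).trans_eq ?_
  refine setIntegral_congr_fun measurableSet_Ioi fun x hx => ?_
  rw [norm_mul, Complex.norm_real, Complex.norm_cpow_eq_rpow_re_of_pos hx]
  simp [_root_.abs_of_nonneg (Real.exp_pos (-x)).le, Complex.sub_re]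

lemma line_re (σ t : ℝ) : ((σ : ℂ) + t * I).re = σ := by simp

lemma line_ne_neg_nat {σ : ℝ} (hσ : 0 < σ) (t : ℝ) (m : ℕ) : (σ : ℂ) + t * I ≠ -m := by
  intro h
  have := congrArg Complex.re h
  rw [line_re] at this
  simp at this
  linarith [this, Nat.cast_nonneg (α := ℝ) m]

lemma cont_Gamma_line {σ : ℝ} (hσ : 0 < σ) :
    Continuous fun t : ℝ => Complex.Gamma ((σ : ℂ) + t * I) := by
  rw [continuous_iff_continuousAt]
  intro t
  exact ContinuousAt.comp
    (Complex.differentiableAt_Gamma _ (line_ne_neg_nat hσ t)).continuousAt (by fun_prop)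

lemma Gamma_vert {σ : ℝ} (hσ : 1 ≤ σ) :
    Integrable fun t : ℝ => Complex.Gamma ((σ : ℂ) + t * I) := by
  have hσ0 : (0:ℝ) < σ := lt_of_lt_of_le one_pos hσ
  refine Integrable.mono' ((integrable_inv_one_add_sq).const_mul (Real.Gamma (σ + 2)))
    (cont_Gamma_line hσ0).aestronglyMeasurable ?_
  filter_upwards with t
  set s : ℂ := (σ : ℂ) + t * I with hs
  have hsre : s.re = σ := line_re σ t
  have hsim : s.im = t := by simp [hs]
  have hs0 : s ≠ 0 := by
    intro h; rw [h] at hsre; simp at hsre; linarith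
  have hs1 : s + 1 ≠ 0 := by
    intro h
    have := congrArg Complex.re h
    simp [hsre] at this
    linarith
  have hrec : Complex.Gamma (s + 2) = (s + 1) * s * Complex.Gamma s := by
    have h1 : Complex.Gamma (s + 1 + 1) = (s + 1) * Complex.Gamma (s + 1) :=
      Complex.Gamma_add_one _ hs1
    have h2 : Complex.Gamma (s + 1) = s * Complex.Gamma s := Complex.Gamma_add_one _ hs0
    rw [show s + 2 = s + 1 + 1 by ring, h1, h2]; ring
  have hB : (1 + t ^ 2) ≤ ‖s‖ ^ 2 := by
    rw [Complex.sq_norm, Complex.normSq_apply, hsre, hsim]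
    nlinarith
  have hC : (1 + t ^ 2) ≤ ‖s + 1‖ ^ 2 := by
    rw [Complex.sq_norm, Complex.normSq_apply]
    simp only [Complex.add_re, Complex.add_im, Complex.one_re, Complex.one_im, hsre, hsim]
    nlinarith
  have hGnorm : ‖s + 1‖ * ‖s‖ * ‖Complex.Gamma s‖ ≤ Real.Gamma (σ + 2) := by
    have : ‖Complex.Gamma (s + 2)‖ ≤ Real.Gamma (σ + 2) := by
      have : (s + 2).re = σ + 2 := by rw [Complex.add_re, hsre]; norm_num
      rw [← this]
      exact norm_Gamma_le (by rw [this]; linarith)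
    calc ‖s + 1‖ * ‖s‖ * ‖Complex.Gamma s‖ = ‖(s + 1) * s * Complex.Gamma s‖ := by
          rw [norm_mul, norm_mul]
      _ = ‖Complex.Gamma (s + 2)‖ := by rw [hrec]
      _ ≤ Real.Gamma (σ + 2) := this
  have ht2 : (0:ℝ) < 1 + t ^ 2 := by positivity
  have hBC : 1 + t ^ 2 ≤ ‖s + 1‖ * ‖s‖ := by
    nlinarith [norm_nonneg s, norm_nonneg (s + 1), mul_nonneg (norm_nonneg (s+1)) (norm_nonneg s)]
  rw [mul_comm (Real.Gamma (σ + 2)), ← div_eq_inv_mul, le_div_iff₀ ht2]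
  calc ‖Complex.Gamma s‖ * (1 + t ^ 2) ≤ ‖Complex.Gamma s‖ * (‖s + 1‖ * ‖s‖) := by
        gcongr
    _ = ‖s + 1‖ * ‖s‖ * ‖Complex.Gamma s‖ := by ring
    _ ≤ Real.Gamma (σ + 2) := hGnorm

lemma exp_mellinInv {σ : ℝ} (hσ : 1 ≤ σ) {u : ℝ} (hu : 0 < u) :
    (Real.exp (-u) : ℂ) = (1 / (2 * (Real.pi : ℂ))) *
      ∫ t : ℝ, (u : ℂ) ^ (-((σ : ℂ) + t * I)) * Complex.Gamma ((σ : ℂ) + t * I) := by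
  have hσ0 : (0:ℝ) < σ := lt_of_lt_of_le one_pos hσ
  set f : ℝ → ℂ := fun y => (Real.exp (-y) : ℂ) with hf
  have hmel : ∀ s : ℂ, 0 < s.re → mellin f s = Complex.Gamma s := by
    intro s hs
    rw [← Complex.GammaIntegral_eq_mellin, ← Complex.Gamma_eq_integral hs]
  have hconv : MellinConvergent f σ := by
    have := Complex.GammaIntegral_convergent (s := (σ:ℂ)) (by simpa using hσ0)
    refine this.congr_fun (fun x hx => ?_) measurableSet_Ioi
    simp [f, smul_eq_mul, mul_comm]
  have hvert : Complex.VerticalIntegrable (mellin f) σ := by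
    refine (Gamma_vert hσ).congr ?_
    filter_upwards with t
    rw [hmel _ (by rw [line_re]; exact hσ0)]
  have hcont : ContinuousAt f u := by fun_prop
  have := mellinInv_mellin_eq σ f hu hconv hvert hcont
  rw [mellinInv] at this
  have h2 : (fun t : ℝ => (u : ℂ) ^ (-((σ:ℂ) + t * I)) • mellin f ((σ:ℂ) + t * I))
      = fun t : ℝ => (u : ℂ) ^ (-((σ:ℂ) + t * I)) * Complex.Gamma ((σ:ℂ) + t * I) := by
    funext t
    rw [smul_eq_mul, hmel _ (by rw [line_re]; exact hσ0)]
  rw [h2] at this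
  rw [show f u = (Real.exp (-u) : ℂ) from rfl] at this
  rw [← this, Complex.real_smul]
  congr 1
  push_cast
  ring
theorem stmt5 (a : ℕ → ℂ) (C σ₀ : ℝ) (hC : 0 < C) (hσ₀ : 0 ≤ σ₀)
    (ha : ∀ m : ℕ, 1 ≤ m → ‖a m‖ ≤ C * (m : ℝ) ^ σ₀)
    (σ : ℝ) (hσ : σ₀ + 1 < σ) (X : ℝ) (hX : 0 < X) :
    Summable (fun m : ℕ+ => ‖a (m : ℕ) * (Real.exp (-(m : ℝ) / X) : ℂ)‖) ∧
    (∀ s : ℂ, σ₀ + 1 < s.re → Summable (fun m : ℕ+ => ‖a (m : ℕ) * (m : ℂ) ^ (-s)‖)) ∧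
    Integrable (fun t : ℝ =>
      (∑' m : ℕ+, a (m : ℕ) * (m : ℂ) ^ (-((σ : ℂ) + t * I))) *
        Complex.Gamma ((σ : ℂ) + t * I) * (X : ℂ) ^ ((σ : ℂ) + t * I)) ∧
    (∑' m : ℕ+, a (m : ℕ) * (Real.exp (-(m : ℝ) / X) : ℂ))
      = (1 / (2 * (Real.pi : ℂ))) * ∫ t : ℝ,
          (∑' m : ℕ+, a (m : ℕ) * (m : ℂ) ^ (-((σ : ℂ) + t * I))) *
            Complex.Gamma ((σ : ℂ) + t * I) * (X : ℂ) ^ ((σ : ℂ) + t * I) := by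
  have hσ1 : (1:ℝ) ≤ σ := by linarith
  have hσ0' : (0:ℝ) < σ := by linarith
  have hmpos : ∀ m : ℕ+, (0:ℝ) < ((m:ℕ):ℝ) := fun m => by exact_mod_cast m.pos
  have hm1 : ∀ m : ℕ+, (1:ℝ) ≤ ((m:ℕ):ℝ) := fun m => by exact_mod_cast m.one_le
  have hcm : ∀ m : ℕ+, (m : ℂ) = (((m:ℕ):ℝ) : ℂ) := fun m => by push_cast; ring
  have hnormm : ∀ (m : ℕ+) (s : ℂ), ‖(m:ℂ) ^ (-s)‖ = ((m:ℕ):ℝ) ^ (-s.re) := by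
    intro m s
    rw [hcm, Complex.norm_cpow_eq_rpow_re_of_pos (hmpos m), Complex.neg_re]
  have hXnorm : ∀ t : ℝ, ‖(X:ℂ) ^ ((σ:ℂ) + t * I)‖ = X ^ σ := by
    intro t
    rw [Complex.norm_cpow_eq_rpow_re_of_pos hX, line_re]
  -- Part 2
  have hS : ∀ s : ℂ, σ₀ + 1 < s.re → Summable (fun m : ℕ+ => ‖a (m:ℕ) * (m:ℂ) ^ (-s)‖) := by
    intro s hs
    have h1 : Summable (fun n : ℕ => (n:ℝ) ^ (σ₀ - s.re)) :=
      Real.summable_nat_rpow.mpr (by linarith)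
    have hmaj : Summable (fun m : ℕ+ => C * ((m:ℕ):ℝ) ^ (σ₀ - s.re)) :=
      (h1.comp_injective PNat.coe_injective).mul_left C
    refine Summable.of_nonneg_of_le (fun m => norm_nonneg _) (fun m => ?_) hmaj
    rw [norm_mul, hnormm]
    calc ‖a (m:ℕ)‖ * ((m:ℕ):ℝ) ^ (-s.re)
        ≤ (C * ((m:ℕ):ℝ) ^ σ₀) * ((m:ℕ):ℝ) ^ (-s.re) := by
          gcongr
          exact ha (m:ℕ) m.one_le
      _ = C * ((m:ℕ):ℝ) ^ (σ₀ - s.re) := by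
          rw [mul_assoc, ← Real.rpow_add (hmpos m)]
          ring_nf
  have hσre : σ₀ + 1 < ((σ:ℂ)).re := by simpa using hσ
  -- Part 1
  have h1 : Summable (fun m : ℕ+ => ‖a (m:ℕ) * (Real.exp (-(m:ℝ) / X) : ℂ)‖) := by
    set k := ⌈σ₀⌉₊ with hk
    have hr1 : ‖Real.exp (-1 / X)‖ < 1 := by
      rw [Real.norm_eq_abs, abs_of_pos (Real.exp_pos _)]
      apply Real.exp_lt_one_iff.mpr
      rw [neg_div]
      simp [hX]
    have hmaj : Summable (fun n : ℕ => C * ((n:ℝ) ^ k * Real.exp (-1 / X) ^ n)) :=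
      (summable_pow_mul_geometric_of_norm_lt_one k hr1).mul_left C
    refine Summable.of_nonneg_of_le (fun m => norm_nonneg _) (fun m => ?_)
      (hmaj.comp_injective PNat.coe_injective)
    rw [norm_mul]
    have he : ‖(Real.exp (-(m:ℝ) / X) : ℂ)‖ = Real.exp (-1 / X) ^ (m:ℕ) := by
      rw [Complex.norm_real, Real.norm_eq_abs, abs_of_pos (Real.exp_pos _),
        ← Real.exp_nat_mul]
      congr 1
      push_cast
      field_simp
    rw [he]
    have hpow : ‖a (m:ℕ)‖ ≤ C * ((m:ℕ):ℝ) ^ (k:ℕ) := by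
      refine (ha (m:ℕ) m.one_le).trans ?_
      rw [← Real.rpow_natCast ((m:ℕ):ℝ) k]
      gcongr
      · exact hm1 m
      · exact Nat.le_ceil σ₀
    calc ‖a (m:ℕ)‖ * Real.exp (-1 / X) ^ (m:ℕ)
        ≤ (C * ((m:ℕ):ℝ) ^ (k:ℕ)) * Real.exp (-1 / X) ^ (m:ℕ) := by
          gcongr
      _ = C * (((m:ℕ):ℝ) ^ k * Real.exp (-1 / X) ^ (m:ℕ)) := by ring
  -- the L-function along the line, continuity
  have hcont_line : ∀ m : ℕ+, Continuous (fun t : ℝ => (m:ℂ) ^ (-((σ:ℂ) + t * I))) := by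
    intro m
    refine Continuous.const_cpow (by fun_prop) (Or.inl ?_)
    rw [hcm]
    exact_mod_cast (hmpos m).ne'
  have hLcont : Continuous (fun t : ℝ => ∑' m : ℕ+, a (m:ℕ) * (m:ℂ) ^ (-((σ:ℂ) + t * I))) := by
    refine continuous_tsum (fun m => continuous_const.mul (hcont_line m)) (hS σ hσre)
      (fun m t => ?_)
    rw [norm_mul, norm_mul, hnormm, hnormm]
    simp [line_re]
  have hXcont : Continuous (fun t : ℝ => (X:ℂ) ^ ((σ:ℂ) + t * I)) :=
    Continuous.const_cpow (by fun_prop) (Or.inl (by exact_mod_cast hX.ne'))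
  have hFcont : Continuous (fun t : ℝ =>
      (∑' m : ℕ+, a (m:ℕ) * (m:ℂ) ^ (-((σ:ℂ) + t * I))) *
        Complex.Gamma ((σ:ℂ) + t * I) * (X:ℂ) ^ ((σ:ℂ) + t * I)) :=
    (hLcont.mul (cont_Gamma_line hσ0')).mul hXcont
  set K : ℝ := ∑' m : ℕ+, ‖a (m:ℕ) * (m:ℂ) ^ (-(σ:ℂ))‖ with hK
  have hLbound : ∀ t : ℝ, ‖∑' m : ℕ+, a (m:ℕ) * (m:ℂ) ^ (-((σ:ℂ) + t * I))‖ ≤ K := by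
    intro t
    refine (norm_tsum_le_tsum_norm (hS _ (by rw [line_re]; exact hσ))).trans (le_of_eq ?_)
    refine tsum_congr fun m => ?_
    rw [norm_mul, norm_mul, hnormm, hnormm]
    simp [line_re]
  -- Part 3
  have h3 : Integrable (fun t : ℝ =>
      (∑' m : ℕ+, a (m:ℕ) * (m:ℂ) ^ (-((σ:ℂ) + t * I))) *
        Complex.Gamma ((σ:ℂ) + t * I) * (X:ℂ) ^ ((σ:ℂ) + t * I)) := by
    refine Integrable.mono' (((Gamma_vert hσ1).norm.const_mul (K * X ^ σ)))
      hFcont.aestronglyMeasurable (Filter.Eventually.of_forall fun t => ?_)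
    rw [norm_mul, norm_mul, hXnorm]
    calc ‖∑' m : ℕ+, a (m:ℕ) * (m:ℂ) ^ (-((σ:ℂ) + t * I))‖ *
          ‖Complex.Gamma ((σ:ℂ) + t * I)‖ * X ^ σ
        ≤ K * ‖Complex.Gamma ((σ:ℂ) + t * I)‖ * X ^ σ := by
          gcongr
          exact hLbound t
      _ = K * X ^ σ * ‖Complex.Gamma ((σ:ℂ) + t * I)‖ := by ring
  refine ⟨h1, hS, h3, ?_⟩
  -- Part 4: the equality
  set F : ℕ+ → ℝ → ℂ := fun m t =>
    (a (m:ℕ) * (m:ℂ) ^ (-((σ:ℂ) + t * I))) *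
      (Complex.Gamma ((σ:ℂ) + t * I) * (X:ℂ) ^ ((σ:ℂ) + t * I)) with hF
  have hkey : ∀ (m : ℕ+) (t : ℝ),
      (((((m:ℕ):ℝ)) / X : ℝ) : ℂ) ^ (-((σ:ℂ) + t * I)) =
        (m:ℂ) ^ (-((σ:ℂ) + t * I)) * (X:ℂ) ^ ((σ:ℂ) + t * I) := by
    intro m t
    have hX0 : (X:ℂ) ≠ 0 := by exact_mod_cast hX.ne'
    have hmX : (0:ℝ) ≤ ((m:ℕ):ℝ) / X := by positivity
    have hinv : ((X:ℝ):ℂ) ^ (-((σ:ℂ) + t * I)) * ((X:ℝ):ℂ) ^ ((σ:ℂ) + t * I) = 1 := by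
      rw [← Complex.cpow_add _ _ hX0, neg_add_cancel, Complex.cpow_zero]
    calc ((((m:ℕ):ℝ) / X : ℝ) : ℂ) ^ (-((σ:ℂ) + t * I))
        = ((((m:ℕ):ℝ) / X : ℝ) : ℂ) ^ (-((σ:ℂ) + t * I)) *
            (((X:ℝ):ℂ) ^ (-((σ:ℂ) + t * I)) * ((X:ℝ):ℂ) ^ ((σ:ℂ) + t * I)) := by
          rw [hinv, mul_one]
      _ = (((((m:ℕ):ℝ) / X) * X : ℝ) : ℂ) ^ (-((σ:ℂ) + t * I)) * (X:ℂ) ^ ((σ:ℂ) + t * I) := by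
          rw [Complex.ofReal_mul, Complex.mul_cpow_ofReal_nonneg hmX hX.le]
          ring
      _ = (m:ℂ) ^ (-((σ:ℂ) + t * I)) * (X:ℂ) ^ ((σ:ℂ) + t * I) := by
          rw [div_mul_cancel₀ _ hX.ne', hcm]
  have hA : ∀ m : ℕ+, a (m:ℕ) * (Real.exp (-(m:ℝ) / X) : ℂ)
      = (1 / (2 * (Real.pi : ℂ))) * ∫ t : ℝ, F m t := by
    intro m
    have hu : (0:ℝ) < ((m:ℕ):ℝ) / X := by positivity
    have hme : -((m:ℝ)) / X = -(((m:ℕ):ℝ) / X) := by push_cast; ring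
    rw [hme, exp_mellinInv hσ1 hu, ← mul_assoc, mul_comm (a (m:ℕ)), mul_assoc,
      ← integral_const_mul]
    congr 1
    refine integral_congr_ae (Filter.Eventually.of_forall fun t => ?_)
    simp only [hF, hkey m t]
    ring
  have hFnorm : ∀ (m : ℕ+) (t : ℝ),
      ‖F m t‖ = (‖a (m:ℕ) * (m:ℂ) ^ (-(σ:ℂ))‖ * X ^ σ) * ‖Complex.Gamma ((σ:ℂ) + t * I)‖ := by
    intro m t
    simp only [hF]
    rw [norm_mul, norm_mul, norm_mul, norm_mul, hnormm, hnormm, hXnorm]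
    simp only [line_re, Complex.ofReal_re]
    ring
  have hFint : ∀ m : ℕ+, Integrable (F m) := by
    intro m
    refine Integrable.mono'
      (((Gamma_vert hσ1).norm.const_mul (‖a (m:ℕ) * (m:ℂ) ^ (-(σ:ℂ))‖ * X ^ σ)))
      ?_ (Filter.Eventually.of_forall fun t => le_of_eq (hFnorm m t))
    exact ((continuous_const.mul (hcont_line m)).mul
      ((cont_Gamma_line hσ0').mul hXcont)).aestronglyMeasurable
  have hFsum : Summable fun m : ℕ+ => ∫ t : ℝ, ‖F m t‖ := by
    have : ∀ m : ℕ+, ∫ t : ℝ, ‖F m t‖ =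
        (‖a (m:ℕ) * (m:ℂ) ^ (-(σ:ℂ))‖ * X ^ σ) *
          ∫ t : ℝ, ‖Complex.Gamma ((σ:ℂ) + t * I)‖ := by
      intro m
      rw [← integral_const_mul]
      exact integral_congr_ae (Filter.Eventually.of_forall fun t => hFnorm m t)
    simp only [this]
    simp_rw [mul_assoc]
    exact (hS σ hσre).mul_right _
  calc (∑' m : ℕ+, a (m:ℕ) * (Real.exp (-(m:ℝ) / X) : ℂ))
      = ∑' m : ℕ+, (1 / (2 * (Real.pi : ℂ))) * ∫ t : ℝ, F m t := tsum_congr hA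
    _ = (1 / (2 * (Real.pi : ℂ))) * ∑' m : ℕ+, ∫ t : ℝ, F m t := tsum_mul_left
    _ = (1 / (2 * (Real.pi : ℂ))) * ∫ t : ℝ, ∑' m : ℕ+, F m t := by
        rw [integral_tsum_of_summable_integral_norm hFint hFsum]
    _ = (1 / (2 * (Real.pi : ℂ))) * ∫ t : ℝ,
          (∑' m : ℕ+, a (m:ℕ) * (m:ℂ) ^ (-((σ:ℂ) + t * I))) *
            Complex.Gamma ((σ:ℂ) + t * I) * (X:ℂ) ^ ((σ:ℂ) + t * I) := by
        congr 1
        refine integral_congr_ae (Filter.Eventually.of_forall fun t => ?_)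
        simp only [hF]
        rw [tsum_mul_right, mul_assoc]
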